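/- For every integer k ≥ 2, the finite trigonometric sum Σ_{j=1}^{k-1} 1/sin⁴(jπ/k) equals (k⁴ - 1)/45 + 2(k² - 1)/9. -/

import Mathlib

open Finset Complex


-- Faulhaber
lemma fh1 (n : ℕ) : ∑ i ∈ range n, (i:ℂ) = n*(n-1)/2 := by
  induction n with
  | zero => simp
  | succ n ih => rw [Finset.sum_range_succ, ih]; push_cast; ring

lemma fh2 (n : ℕ) : ∑ i ∈ range n, (i:ℂ)^2 = n*(n-1)*(2*n-1)/6 := by
  induction n with
  | zero => simp
  | succ n ih => rw [Finset.sum_range_succ, ih]; push_cast; ring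

lemma fh3 (n : ℕ) : ∑ i ∈ range n, (i:ℂ)^3 = n^2*(n-1)^2/4 := by
  induction n with
  | zero => simp
  | succ n ih => rw [Finset.sum_range_succ, ih]; push_cast; ring

lemma fh4 (n : ℕ) : ∑ i ∈ range n, (i:ℂ)^4 = n*(n-1)*(2*n-1)*(3*n^2-3*n-1)/30 := by
  induction n with
  | zero => simp
  | succ n ih => rw [Finset.sum_range_succ, ih]; push_cast; ring

-- telescoping
lemma tele (k m : ℕ) (hm : m ≠ 0) (z : ℂ) (hzk : z ^ k = 1) :
    z * (∑ i ∈ range k, ((i:ℂ)+1)^m * z^i) - ∑ i ∈ range k, (i:ℂ)^m * z^i = (k:ℂ)^m := by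
  have h := Finset.sum_range_sub (fun i => (i:ℂ)^m * z^i) k
  have e : z * (∑ i ∈ range k, ((i:ℂ)+1)^m * z^i) - ∑ i ∈ range k, (i:ℂ)^m * z^i
      = ∑ i ∈ range k, (((i+1:ℕ):ℂ)^m * z^(i+1) - (i:ℂ)^m * z^i) := by
    rw [Finset.mul_sum, ← Finset.sum_sub_distrib]
    refine Finset.sum_congr rfl fun i _ => ?_
    push_cast
    ring
  rw [e, h, hzk]
  simp [zero_pow hm]

noncomputable def zz (k j : ℕ) : ℂ := Complex.exp (2 * (Real.pi:ℂ) * Complex.I * j / k)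

lemma zz_pow_k (k j : ℕ) (hk : k ≠ 0) : (zz k j) ^ k = 1 := by
  rw [zz, ← Complex.exp_nat_mul]
  have hk0 : (k:ℂ) ≠ 0 := Nat.cast_ne_zero.mpr hk
  have h : (k:ℂ) * (2 * (Real.pi:ℂ) * Complex.I * j / k)
      = ((j:ℤ):ℂ) * (2 * (Real.pi:ℂ) * Complex.I) := by
    push_cast
    field_simp
  rw [h, Complex.exp_int_mul_two_pi_mul_I]

lemma zz_ne_one (k j : ℕ) (h1 : 1 ≤ j) (h2 : j < k) : zz k j ≠ 1 := by
  intro h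
  rw [zz, Complex.exp_eq_one_iff] at h
  obtain ⟨n, hn⟩ := h
  have hk0 : (k:ℂ) ≠ 0 := Nat.cast_ne_zero.mpr (by omega)
  have hpi : (Real.pi:ℂ) ≠ 0 := Complex.ofReal_ne_zero.mpr Real.pi_ne_zero
  have h2pi : (2:ℂ) * (Real.pi:ℂ) * Complex.I ≠ 0 := by
    simp [hpi, Complex.I_ne_zero]
  have hj : (j:ℂ) = (n:ℂ) * k := by
    apply mul_left_cancel₀ h2pi
    field_simp at hn
    linear_combination (2 * (Real.pi:ℂ) * Complex.I) * hn
  have hj' : (j:ℤ) = n * k := by exact_mod_cast hj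
  have hkpos : (0:ℤ) < k := by exact_mod_cast (show 0 < k by omega)
  have h1' : (1:ℤ) ≤ n*k := by rw [← hj']; exact_mod_cast h1
  have h2' : n*k < k := by rw [← hj']; exact_mod_cast h2
  rcases le_or_gt n 0 with h | h
  · have : n*k ≤ 0 := mul_nonpos_of_nonpos_of_nonneg h hkpos.le
    omega
  · have : k ≤ n*k := le_mul_of_one_le_left hkpos.le h
    omega

lemma rootsum (k i : ℕ) (hi1 : 1 ≤ i) (hik : i < k) :
    ∑ j ∈ Finset.Ico 1 k, (zz k j) ^ i = -1 := by
  have hk : k ≠ 0 := by omega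
  have hk0 : (k:ℂ) ≠ 0 := Nat.cast_ne_zero.mpr hk
  have key : ∀ j : ℕ, (zz k j) ^ i = (zz k i) ^ j := by
    intro j
    rw [zz, zz, ← Complex.exp_nat_mul, ← Complex.exp_nat_mul]
    congr 1
    ring
  have hgeo : ∑ j ∈ range k, (zz k i) ^ j = 0 := by
    rw [geom_sum_eq (zz_ne_one k i hi1 hik), zz_pow_k k i hk]
    simp
  have hsplit : ∑ j ∈ range k, (zz k i) ^ j
      = (zz k i) ^ 0 + ∑ j ∈ Finset.Ico 1 k, (zz k i) ^ j := by
    rw [Finset.range_eq_Ico]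
    exact Finset.sum_eq_sum_Ico_succ_bot (by omega) _
  have : ∑ j ∈ Finset.Ico 1 k, (zz k i) ^ j = -1 := by
    rw [hsplit] at hgeo
    simp only [pow_zero] at hgeo
    linear_combination hgeo
  rw [Finset.sum_congr rfl fun j _ => key j]
  exact this

lemma perRoot (k : ℕ) (hk : 2 ≤ k) (z : ℂ) (hz1 : z ≠ 1) (hzk : z ^ k = 1) :
    16 * z^2 / (1-z)^4 =
      (2/(3*(k:ℂ))) * (-2*(k:ℂ) * (∑ i ∈ range k, (i:ℂ)*z^i)
      + (2-(k:ℂ)^2) * (∑ i ∈ range k, (i:ℂ)^2*z^i)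
      + 2*(k:ℂ) * (∑ i ∈ range k, (i:ℂ)^3*z^i)
      - (∑ i ∈ range k, (i:ℂ)^4*z^i)) := by
  have hk0 : (k:ℂ) ≠ 0 := Nat.cast_ne_zero.mpr (by omega)
  have hw : z - 1 ≠ 0 := sub_ne_zero.mpr hz1
  have hw' : (1:ℂ) - z ≠ 0 := fun h => hw (by linear_combination -h)
  set S1 := ∑ i ∈ range k, (i:ℂ)*z^i with hS1def
  set S2 := ∑ i ∈ range k, (i:ℂ)^2*z^i with hS2def
  set S3 := ∑ i ∈ range k, (i:ℂ)^3*z^i with hS3def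
  set S4 := ∑ i ∈ range k, (i:ℂ)^4*z^i with hS4def
  have hS0 : ∑ i ∈ range k, z^i = 0 := by
    have h := geom_sum_eq hz1 k
    rw [hzk] at h
    simp [h]
  have h1 := tele k 1 one_ne_zero z hzk
  have h2 := tele k 2 two_ne_zero z hzk
  have h3 := tele k 3 three_ne_zero z hzk
  have h4 := tele k 4 (by norm_num) z hzk
  have e1 : ∑ i ∈ range k, ((i:ℂ)+1)^1 * z^i = S1 + ∑ i ∈ range k, z^i := by
    rw [hS1def, ← Finset.sum_add_distrib]; exact Finset.sum_congr rfl fun i _ => by ring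
  have e2 : ∑ i ∈ range k, ((i:ℂ)+1)^2 * z^i = S2 + 2*S1 + ∑ i ∈ range k, z^i := by
    rw [hS1def, hS2def, Finset.mul_sum, ← Finset.sum_add_distrib, ← Finset.sum_add_distrib]
    exact Finset.sum_congr rfl fun i _ => by ring
  have e3 : ∑ i ∈ range k, ((i:ℂ)+1)^3 * z^i = S3 + 3*S2 + 3*S1 + ∑ i ∈ range k, z^i := by
    rw [hS1def, hS2def, hS3def, Finset.mul_sum, Finset.mul_sum, ← Finset.sum_add_distrib,
      ← Finset.sum_add_distrib, ← Finset.sum_add_distrib]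
    exact Finset.sum_congr rfl fun i _ => by ring
  have e4 : ∑ i ∈ range k, ((i:ℂ)+1)^4 * z^i
      = S4 + 4*S3 + 6*S2 + 4*S1 + ∑ i ∈ range k, z^i := by
    rw [hS1def, hS2def, hS3def, hS4def, Finset.mul_sum, Finset.mul_sum, Finset.mul_sum,
      ← Finset.sum_add_distrib, ← Finset.sum_add_distrib, ← Finset.sum_add_distrib,
      ← Finset.sum_add_distrib]
    exact Finset.sum_congr rfl fun i _ => by ring
  rw [e1, hS0] at h1
  simp only [pow_one] at h1
  rw [e2, hS0] at h2
  rw [e3, hS0] at h3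
  rw [e4, hS0] at h4
  have E1 : (z-1) * S1 = (k:ℂ) := by linear_combination h1
  have E2 : (z-1) * S2 = (k:ℂ)^2 - 2*k - 2*S1 := by linear_combination h2 - 2*E1
  have E3 : (z-1) * S3 = (k:ℂ)^3 - 3*(k:ℂ)^2 + 3*k - 3*S2 + 3*S1 := by
    linear_combination h3 - 3*E2 - 3*E1
  have E4 : (z-1) * S4 = (k:ℂ)^4 - 4*(k:ℂ)^3 + 6*(k:ℂ)^2 - 4*k - 4*S3 + 6*S2 - 4*S1 := by
    linear_combination h4 - 4*E3 - 6*E2 - 4*E1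
  have g2 : (z-1)^2 * S2 = ((k:ℂ)^2-2*k)*(z-1) - 2*k := by
    linear_combination (z-1)*E2 - 2*E1
  have g3 : (z-1)^3 * S3
      = ((k:ℂ)^3-3*(k:ℂ)^2+3*k)*(z-1)^2 + (9*(k:ℂ)-3*(k:ℂ)^2)*(z-1) + 6*k := by
    linear_combination (z-1)^2*E3 - 3*(z-1)*E2 + (3*(z-1)+6)*E1
  have g4 : (z-1)^4 * S4
      = ((k:ℂ)^4-4*(k:ℂ)^3+6*(k:ℂ)^2-4*k)*(z-1)^3 + (-4*(k:ℂ)^3+18*(k:ℂ)^2-28*k)*(z-1)^2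
        + (12*(k:ℂ)^2-48*k)*(z-1) - 24*k := by
    linear_combination (z-1)^3*E4 - 4*(z-1)^2*E3 + (6*(z-1)^2+12*(z-1))*E2 - (4*(z-1)^2 + 24*(z-1) + 24)*E1
  have key : (z-1)^4 * (-2*(k:ℂ)*S1 + (2-(k:ℂ)^2)*S2 + 2*(k:ℂ)*S3 - S4) = 24*k*z^2 := by
    linear_combination (-2*(k:ℂ)*(z-1)^3)*E1 + ((2-(k:ℂ)^2)*(z-1)^2)*g2 + (2*(k:ℂ)*(z-1))*g3 - g4
  have hX : -2*(k:ℂ)*S1 + (2-(k:ℂ)^2)*S2 + 2*(k:ℂ)*S3 - S4 = 24*k*z^2/(z-1)^4 := by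
    rw [eq_div_iff (pow_ne_zero 4 hw)]
    linear_combination key
  have h14 : (1-z)^4 = (z-1)^4 := by ring
  calc 16 * z^2 / (1-z)^4
      = (2/(3*(k:ℂ))) * (24*k*z^2/(z-1)^4) := by
        rw [h14]; field_simp; ring
    _ = (2/(3*(k:ℂ))) * (-2*(k:ℂ)*S1 + (2-(k:ℂ)^2)*S2 + 2*(k:ℂ)*S3 - S4) := by rw [hX]
    _ = (2/(3*(k:ℂ))) * (-2*(k:ℂ)*S1 + (2-(k:ℂ)^2)*S2 + 2*(k:ℂ)*S3 - S4) := rfl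

lemma trig (k j : ℕ) (hj1 : 1 ≤ j) (hjk : j < k) :
    ((1 / Real.sin ((j:ℝ) * Real.pi / k) ^ 4 : ℝ) : ℂ)
      = 16 * (zz k j)^2 / (1 - zz k j)^4 := by
  have hk0 : (k:ℝ) ≠ 0 := Nat.cast_ne_zero.mpr (by omega)
  have hkc : (k:ℂ) ≠ 0 := Nat.cast_ne_zero.mpr (by omega)
  have hkpos : (0:ℝ) < k := Nat.cast_pos.mpr (by omega)
  set θ : ℝ := (j:ℝ) * Real.pi / k with hθ
  have hθpos : 0 < θ := by
    apply div_pos _ hkpos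
    exact mul_pos (by exact_mod_cast hj1) Real.pi_pos
  have hθlt : θ < Real.pi := by
    rw [hθ, div_lt_iff₀ hkpos]
    have : (j:ℝ) < k := by exact_mod_cast hjk
    nlinarith [Real.pi_pos]
  have hsin : (0:ℝ) < Real.sin θ := Real.sin_pos_of_pos_of_lt_pi hθpos hθlt
  have hsinne : Real.sin θ ≠ 0 := ne_of_gt hsin
  have hsinnec : (Real.sin θ : ℂ) ≠ 0 := Complex.ofReal_ne_zero.mpr hsinne
  set u : ℂ := Complex.exp ((θ:ℂ) * Complex.I) with hu
  have hu0 : u ≠ 0 := Complex.exp_ne_zero _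
  have hz : zz k j = u^2 := by
    rw [zz, hu, sq, ← Complex.exp_add]
    congr 1
    rw [hθ]
    push_cast
    field_simp
    ring
  have hz1 : zz k j ≠ 1 := zz_ne_one k j hj1 hjk
  have hone : (1:ℂ) - zz k j ≠ 0 := fun h => hz1 (by linear_combination -h)
  have h1u : (1:ℂ) - u^2 ≠ 0 := by rw [← hz]; exact hone
  have hsinc : (Real.sin θ : ℂ) = (u⁻¹ - u) * Complex.I / 2 := by
    rw [Complex.ofReal_sin, Complex.sin, hu, ← Complex.exp_neg]
    ring_nf
  have hI4 : Complex.I ^ 4 = 1 := by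
    rw [show (4:ℕ) = 2*2 from rfl, pow_mul, Complex.I_sq]; norm_num
  have hs4 : ((Real.sin θ : ℂ))^4 = (1 - u^2)^4 / (16 * u^4) := by
    rw [hsinc]
    field_simp [hu0]
    linear_combination 16 * hI4
  rw [Complex.ofReal_div, Complex.ofReal_one, Complex.ofReal_pow, hs4, hz]
  rw [one_div_div]
  ring


/-- For every integer `k ≥ 2`,
`∑_{j=1}^{k-1} 1/sin⁴(jπ/k) = (k⁴ - 1)/45 + 2(k² - 1)/9`. -/
theorem sum_inv_sin_pow_four (k : ℕ) (hk : 2 ≤ k) :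
    ∑ j ∈ Finset.Ico 1 k, 1 / Real.sin ((j : ℝ) * Real.pi / k) ^ 4
      = ((k : ℝ) ^ 4 - 1) / 45 + 2 * ((k : ℝ) ^ 2 - 1) / 9 := by
  have hk0 : k ≠ 0 := by omega
  have hkc : (k:ℂ) ≠ 0 := Nat.cast_ne_zero.mpr hk0
  have hQ : ∀ m : ℕ, m ≠ 0 → ∑ j ∈ Finset.Ico 1 k, ∑ i ∈ range k, (i:ℂ)^m * (zz k j)^i
      = -∑ i ∈ range k, (i:ℂ)^m := by
    intro m hm
    rw [Finset.sum_comm]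
    have h : ∀ i ∈ range k, ∑ j ∈ Finset.Ico 1 k, (i:ℂ)^m * (zz k j)^i = -((i:ℂ)^m) := by
      intro i hi
      rw [← Finset.mul_sum]
      rcases Nat.eq_zero_or_pos i with rfl | hpos
      · simp [zero_pow hm]
      · rw [rootsum k i hpos (Finset.mem_range.mp hi)]; ring
    rw [Finset.sum_congr rfl h, Finset.sum_neg_distrib]
  have hQ1 : ∑ j ∈ Finset.Ico 1 k, ∑ i ∈ range k, (i:ℂ) * (zz k j)^i
      = -∑ i ∈ range k, (i:ℂ) := by
    have := hQ 1 one_ne_zero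
    simpa [pow_one] using this
  have main : ∑ j ∈ Finset.Ico 1 k, ((1 / Real.sin ((j:ℝ) * Real.pi / k) ^ 4 : ℝ) : ℂ)
      = ((k:ℂ)^4 - 1)/45 + 2*((k:ℂ)^2 - 1)/9 := by
    have step1 : ∀ j ∈ Finset.Ico 1 k,
        ((1 / Real.sin ((j:ℝ) * Real.pi / k) ^ 4 : ℝ) : ℂ)
        = (2/(3*(k:ℂ))) * (-2*(k:ℂ) * (∑ i ∈ range k, (i:ℂ)*(zz k j)^i)
          + (2-(k:ℂ)^2) * (∑ i ∈ range k, (i:ℂ)^2*(zz k j)^i)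
          + 2*(k:ℂ) * (∑ i ∈ range k, (i:ℂ)^3*(zz k j)^i)
          - (∑ i ∈ range k, (i:ℂ)^4*(zz k j)^i)) := by
      intro j hj
      obtain ⟨hj1, hj2⟩ := Finset.mem_Ico.mp hj
      rw [trig k j hj1 hj2]
      exact perRoot k hk (zz k j) (zz_ne_one k j hj1 hj2) (zz_pow_k k j hk0)
    rw [Finset.sum_congr rfl step1, ← Finset.mul_sum]
    have expand : ∑ j ∈ Finset.Ico 1 k,
        (-2*(k:ℂ) * (∑ i ∈ range k, (i:ℂ)*(zz k j)^i)
          + (2-(k:ℂ)^2) * (∑ i ∈ range k, (i:ℂ)^2*(zz k j)^i)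
          + 2*(k:ℂ) * (∑ i ∈ range k, (i:ℂ)^3*(zz k j)^i)
          - (∑ i ∈ range k, (i:ℂ)^4*(zz k j)^i))
        = -2*(k:ℂ) * (∑ j ∈ Finset.Ico 1 k, ∑ i ∈ range k, (i:ℂ)*(zz k j)^i)
          + (2-(k:ℂ)^2) * (∑ j ∈ Finset.Ico 1 k, ∑ i ∈ range k, (i:ℂ)^2*(zz k j)^i)
          + 2*(k:ℂ) * (∑ j ∈ Finset.Ico 1 k, ∑ i ∈ range k, (i:ℂ)^3*(zz k j)^i)
          - (∑ j ∈ Finset.Ico 1 k, ∑ i ∈ range k, (i:ℂ)^4*(zz k j)^i) := by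
      rw [Finset.sum_sub_distrib, Finset.sum_add_distrib, Finset.sum_add_distrib,
        ← Finset.mul_sum, ← Finset.mul_sum, ← Finset.mul_sum]
    rw [expand, hQ1, hQ 2 two_ne_zero, hQ 3 three_ne_zero, hQ 4 (by norm_num),
      fh1 k, fh2 k, fh3 k, fh4 k]
    field_simp
    ring
  calc ∑ j ∈ Finset.Ico 1 k, 1 / Real.sin ((j : ℝ) * Real.pi / k) ^ 4
      = ((k:ℝ)^4 - 1)/45 + 2*((k:ℝ)^2 - 1)/9 := by exact_mod_cast main
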